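/- Let O be an A-admissible partial orientation of a simple graph G, and let W ⊆ V be a set of vertices such that (1) no step (w,u) ∈ O has w ∈ W and u ∉ W, and (2) there is at least one blank edge {u,w} of O with u ∉ W and w ∈ W. Then there exist u ∉ W and w ∈ W such that O ∪ {(u,w)} is A-admissible. -/

import Mathlib

open Finset SimpleGraph
open scoped Classical

variable {V : Type*} [Fintype V] [DecidableEq V]

set_option linter.unusedSectionVars false
set_option maxHeartbeats 1000000

/-- `O` is a partial orientation of `G`: a set of steps along edges of `G`,
containing at most one direction per edge. -/
def IsPO (G : SimpleGraph V) (O : Finset (V × V)) : Prop :=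
  ∀ p ∈ O, G.Adj p.1 p.2 ∧ (p.2, p.1) ∉ O

/-- A total orientation orients every edge. -/
def IsTotalOn (G : SimpleGraph V) (O : Finset (V × V)) : Prop :=
  ∀ u v : V, G.Adj u v → (u, v) ∈ O ∨ (v, u) ∈ O

/-- `O` contains a directed cycle of steps. -/
def HasDirCycle (O : Finset (V × V)) : Prop :=
  ∃ (k : ℕ) (c : Fin (k + 1) → V), 1 ≤ k ∧ Function.Injective c ∧
    ∀ i : Fin (k + 1), (c i, c (i + 1)) ∈ O

/-- An acyclic partial orientation. -/
def IsAcyclicPO (G : SimpleGraph V) (O : Finset (V × V)) : Prop :=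
  IsPO G O ∧ ¬ HasDirCycle O

/-- Indegree of vertex `v` in the orientation `O`. -/
def indeg (O : Finset (V × V)) (v : V) : ℕ := (O.filter (fun p => p.2 = v)).card

/-- A potential cycle for `O`: a directed cycle of steps, each compatible with `O`
(i.e. whose reversal is not in `O`). -/
def IsPotCycle (G : SimpleGraph V) (O : Finset (V × V)) {k : ℕ} (c : Fin (k + 1) → V) : Prop :=
  1 ≤ k ∧ Function.Injective c ∧
    ∀ i : Fin (k + 1), G.Adj (c i) (c (i + 1)) ∧ (c (i + 1), c i) ∉ O

/-- Score of a step compatible with `O`, with respect to the parameter list `a`. -/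
def stepScore (a : V → V → ℝ) (O : Finset (V × V)) (p : V × V) : ℝ :=
  if p ∈ O then -(a p.2 p.1) else a p.1 p.2

/-- Score of a potential cycle. -/
def cycScore (a : V → V → ℝ) (O : Finset (V × V)) {k : ℕ} (c : Fin (k + 1) → V) : ℝ :=
  ∑ i : Fin (k + 1), stepScore a O (c i, c (i + 1))

/-- `O` is `a`-admissible: every potential cycle has strictly positive score. -/
def IsAdmissible (G : SimpleGraph V) (a : V → V → ℝ) (O : Finset (V × V)) : Prop :=
  ∀ (k : ℕ) (c : Fin (k + 1) → V), IsPotCycle G O c → 0 < cycScore a O c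

/-- `O` is almost-`a`-admissible: not admissible, but no potential cycle has negative score. -/
def IsAlmostAdmissible (G : SimpleGraph V) (a : V → V → ℝ) (O : Finset (V × V)) : Prop :=
  ¬ IsAdmissible G a O ∧
    ∀ (k : ℕ) (c : Fin (k + 1) → V), IsPotCycle G O c → 0 ≤ cycScore a O c

/-- The parameter list condition: the central region of `Σ_G(A)` is nonempty. -/
def HasCentral (G : SimpleGraph V) (a : V → V → ℝ) : Prop :=
  ∃ x : V → ℝ, ∀ u v : V, G.Adj u v → x u - x v < a u v

/-- Number of edges of `G_•` from `i` to vertices outside `W` (including the edge to the sink). -/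
noncomputable def dW (G : SimpleGraph V) (W : Finset V) (i : V) : ℕ :=
  1 + (Finset.univ.filter (fun u => u ∉ W ∧ G.Adj i u)).card

/-- `c` is a parking function of `G_•` with respect to the added sink `v₀`. -/
def IsPF (G : SimpleGraph V) (c : V → ℤ) : Prop :=
  ∀ W : Finset V, W.Nonempty → ∃ i ∈ W, 0 ≤ c i ∧ c i < dW G W i

/-! ### Auxiliary list-weight machinery -/

noncomputable def pw (f : V → V → ℝ) : List V → ℝ
  | [] => 0
  | [_] => 0
  | x :: y :: t => f x y + pw f (y :: t)

@[simp] lemma pw_nil (f : V → V → ℝ) : pw f [] = 0 := rfl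
@[simp] lemma pw_single (f : V → V → ℝ) (v : V) : pw f [v] = 0 := rfl
lemma pw_cons_cons (f : V → V → ℝ) (x y : V) (t : List V) :
    pw f (x :: y :: t) = f x y + pw f (y :: t) := rfl

lemma pw_split (f : V → V → ℝ) (x : V) (t : List V) :
    ∀ s : List V, pw f (s ++ x :: t) = pw f (s ++ [x]) + pw f (x :: t)
  | [] => by simp
  | [a] => by simp [pw_cons_cons]
  | a :: b :: s => by
    have ih := pw_split f x t (b :: s)
    simp only [List.cons_append] at ih ⊢
    rw [pw_cons_cons, pw_cons_cons, ih, add_assoc]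

lemma pw_concat (f : V → V → ℝ) (x : V) :
    ∀ (s : List V) (h : s ≠ []), pw f (s ++ [x]) = pw f s + f (s.getLast h) x
  | [], h => absurd rfl h
  | [a], _ => by simp [pw_cons_cons]
  | a :: b :: s, _ => by
    have ih := pw_concat f x (b :: s) (List.cons_ne_nil _ _)
    simp only [List.cons_append] at ih ⊢
    rw [pw_cons_cons, pw_cons_cons, ih, List.getLast_cons (List.cons_ne_nil _ _), add_assoc]

lemma pw_cons_eq_sum (f : V → V → ℝ) :
    ∀ (l : List V) (v : V),
      pw f (v :: l) = ∑ i : Fin l.length, f ((v :: l).get i.castSucc) ((v :: l).get i.succ)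
  | [], v => by simp
  | b :: t, v => by
    rw [pw_cons_cons, pw_cons_eq_sum f t b]
    simp only [List.length_cons]
    rw [Fin.sum_univ_succ]
    have h0 : f ((v :: b :: t).get (0 : Fin (t.length + 1)).castSucc)
        ((v :: b :: t).get (0 : Fin (t.length + 1)).succ) = f v b := rfl
    rw [h0]
    congr 1

/-! ### Cycle nonnegativity from admissibility -/

lemma cycle_nonneg (G : SimpleGraph V) (a : V → V → ℝ) (O : Finset (V × V)) (ε : ℝ)
    (hcyc : ∀ (k : ℕ) (c : Fin (k + 1) → V), IsPotCycle G O c →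
      ((k : ℝ) + 1) * ε ≤ cycScore a O c)
    (v : V) (t : List V) (ht : t ≠ [])
    (hch : (v :: t).Chain' (fun i j => G.Adj i j ∧ (j, i) ∉ O))
    (hnd : (v :: t).Nodup)
    (hadj : G.Adj ((v :: t).getLast (List.cons_ne_nil _ _)) v)
    (hO : (v, (v :: t).getLast (List.cons_ne_nil _ _)) ∉ O) :
    0 ≤ pw (fun i j => stepScore a O (i, j) - ε) (v :: t)
        + (stepScore a O ((v :: t).getLast (List.cons_ne_nil _ _), v) - ε) := by
  classical
  set k := t.length with hk
  have hk1 : 1 ≤ k := by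
    cases t with
    | nil => exact absurd rfl ht
    | cons b s => simp [hk]
  have hlen : (v :: t).length = k + 1 := by simp [hk]
  let c : Fin (k + 1) → V := fun i => (v :: t).get (Fin.cast hlen.symm i)
  have hc0 : c 0 = v := rfl
  have hclast : c (Fin.last k) = (v :: t).getLast (List.cons_ne_nil _ _) := by
    rw [List.getLast_eq_getElem]
    rfl
  have hcget : ∀ (m : ℕ) (hm : m < k + 1), c ⟨m, hm⟩ = (v :: t).get ⟨m, by omega⟩ := by
    intro m hm; rfl
  have hchain := List.isChain_iff_getElem.mp hch
  have hstep : ∀ i : Fin (k + 1), G.Adj (c i) (c (i + 1)) ∧ (c (i + 1), c i) ∉ O := by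
    intro i
    by_cases hi : (i : ℕ) < k
    · have hv1 : ((i + 1 : Fin (k + 1)) : ℕ) = (i : ℕ) + 1 :=
        Fin.val_add_one_of_lt (by rw [Fin.lt_iff_val_lt_val, Fin.val_last]; exact hi)
      have h1 : c (i + 1) = (v :: t).get ⟨(i : ℕ) + 1, by omega⟩ := by
        have h0 : (i + 1 : Fin (k + 1)) = ⟨(i : ℕ) + 1, by omega⟩ := Fin.ext hv1
        exact (congrArg c h0).trans (hcget _ _)
      have h2 : c i = (v :: t).get ⟨(i : ℕ), by omega⟩ := rfl
      have := hchain (i : ℕ) (by simpa [hlen] using hi)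
      rw [h1, h2]
      convert this using 3 <;> simp [hlen]
    · have hi' : i = Fin.last k := by
        apply Fin.ext; rw [Fin.val_last]; omega
      subst hi'
      rw [Fin.last_add_one, hc0, hclast]
      exact ⟨hadj, hO⟩
  have hpc : IsPotCycle G O c := by
    refine ⟨hk1, ?_, hstep⟩
    have hinj := List.nodup_iff_injective_get.mp hnd
    intro i j hij
    have : Fin.cast hlen.symm i = Fin.cast hlen.symm j := hinj hij
    simpa [Fin.ext_iff] using this
  have hscore := hcyc k c hpc
  -- now compute cycScore
  have hcs : cycScore a O c
      = (∑ i : Fin k, stepScore a O ((v :: t).get (Fin.cast hlen.symm i.castSucc),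
          (v :: t).get (Fin.cast hlen.symm i.succ)))
        + stepScore a O ((v :: t).getLast (List.cons_ne_nil _ _), v) := by
    rw [cycScore, Fin.sum_univ_castSucc]
    have hlast' : stepScore a O (c (Fin.last k), c (Fin.last k + 1))
        = stepScore a O ((v :: t).getLast (List.cons_ne_nil _ _), v) := by
      rw [Fin.last_add_one, hc0, hclast]
    rw [hlast']
    congr 1
    apply Finset.sum_congr rfl
    intro i _
    have hv1 : ((i.castSucc + 1 : Fin (k + 1)) : ℕ) = (i : ℕ) + 1 := by
      rw [Fin.val_add_one_of_lt (Fin.castSucc_lt_last i)]; rfl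
    have h1 : (i.castSucc + 1 : Fin (k + 1)) = i.succ := Fin.ext (by simp [hv1])
    have h2 : c (i.castSucc + 1) = (v :: t).get (Fin.cast hlen.symm i.succ) := congrArg c h1
    rw [h2]
  have hpw := pw_cons_eq_sum (fun i j => stepScore a O (i, j) - ε) t v
  have hpw' : pw (fun i j => stepScore a O (i, j) - ε) (v :: t)
      = (∑ i : Fin k, stepScore a O ((v :: t).get (Fin.cast hlen.symm i.castSucc),
          (v :: t).get (Fin.cast hlen.symm i.succ))) - (k : ℝ) * ε := by
    rw [hpw, Finset.sum_sub_distrib]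
    simp only [Finset.sum_const, Finset.card_univ, Fintype.card_fin, nsmul_eq_mul]
    congr 1
  rw [hpw']
  rw [hcs] at hscore
  linarith

/-! ### Existence of a strict potential for an admissible orientation -/

theorem exists_potential (G : SimpleGraph V) (a : V → V → ℝ) (O : Finset (V × V))
    (hadm : IsAdmissible G a O) :
    ∃ y : V → ℝ, ∀ i j, G.Adj i j → (j, i) ∉ O → y i - y j < stepScore a O (i, j) := by
  classical
  obtain ⟨ε, hε, hcyc⟩ : ∃ ε : ℝ, 0 < ε ∧ ∀ (k : ℕ) (c : Fin (k + 1) → V),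
      IsPotCycle G O c → ((k : ℝ) + 1) * ε ≤ cycScore a O c := by
    set T : Finset (Σ k : Fin (Fintype.card V + 1), Fin (k.1 + 1) → V) :=
      Finset.univ.filter (fun σ => IsPotCycle G O σ.2) with hT
    by_cases hne : T.Nonempty
    · obtain ⟨σ₀, hσ₀, hσmin⟩ := T.exists_min_image
        (fun σ => cycScore a O σ.2 / ((σ.1.1 : ℝ) + 1)) hne
      have hσ₀' : IsPotCycle G O σ₀.2 := by
        simpa [hT] using hσ₀
      refine ⟨cycScore a O σ₀.2 / ((σ₀.1.1 : ℝ) + 1), ?_, ?_⟩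
      · apply div_pos (hadm _ _ hσ₀')
        positivity
      · intro k c hc
        have hkcard : k + 1 ≤ Fintype.card V := by
          have := Fintype.card_le_of_injective c hc.2.1
          simpa using this
        have hk : k < Fintype.card V + 1 := by omega
        have hmem : (⟨⟨k, hk⟩, c⟩ : Σ k : Fin (Fintype.card V + 1), Fin (k.1 + 1) → V) ∈ T := by
          simp [hT, hc]
        have hle := hσmin _ hmem
        rw [le_div_iff₀ (by positivity)] at hle
        calc ((k : ℝ) + 1) * (cycScore a O σ₀.2 / ((σ₀.1.1 : ℝ) + 1))
            = (cycScore a O σ₀.2 / ((σ₀.1.1 : ℝ) + 1)) * ((k : ℝ) + 1) := by ring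
          _ ≤ cycScore a O c := hle
    · refine ⟨1, one_pos, fun k c hc => absurd ?_ hne⟩
      have hkcard : k + 1 ≤ Fintype.card V := by
        have := Fintype.card_le_of_injective c hc.2.1
        simpa using this
      have hk : k < Fintype.card V + 1 := by omega
      exact ⟨⟨⟨k, hk⟩, c⟩, by simp [hT, hc]⟩
  set R : V → V → Prop := fun i j => G.Adj i j ∧ (j, i) ∉ O with hR
  set w : V → V → ℝ := fun i j => stepScore a O (i, j) - ε with hw
  have hfin : ∀ v : V,
      {l : List V | l ≠ [] ∧ l.Chain' R ∧ l.Nodup ∧ l.getLast? = some v}.Finite := by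
    intro v
    apply (List.finite_length_le V (Fintype.card V)).subset
    rintro l ⟨-, -, hnd, -⟩
    exact hnd.length_le_card
  have hmem_single : ∀ v : V, [v] ∈ (hfin v).toFinset := by
    intro v
    rw [Set.Finite.mem_toFinset]
    exact ⟨List.cons_ne_nil _ _, List.isChain_singleton _, List.nodup_singleton _, rfl⟩
  set d : V → ℝ := fun v => ((hfin v).toFinset).inf' ⟨[v], hmem_single v⟩ (pw w) with hd
  have hd_le : ∀ (v : V) (l : List V), l ≠ [] → l.Chain' R → l.Nodup → l.getLast? = some v →
      d v ≤ pw w l := by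
    intro v l h1 h2 h3 h4
    apply Finset.inf'_le
    rw [Set.Finite.mem_toFinset]
    exact ⟨h1, h2, h3, h4⟩
  have hd_ex : ∀ v : V, ∃ l : List V, (l ≠ [] ∧ l.Chain' R ∧ l.Nodup ∧ l.getLast? = some v)
      ∧ d v = pw w l := by
    intro v
    obtain ⟨l, hl, hl2⟩ := Finset.exists_mem_eq_inf' ⟨[v], hmem_single v⟩ (pw w)
    rw [Set.Finite.mem_toFinset] at hl
    exact ⟨l, hl, hl2⟩
  have htri : ∀ i j, R i j → d j ≤ d i + w i j := by
    intro i j hRij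
    obtain ⟨P, ⟨hP1, hP2, hP3, hP4⟩, hPval⟩ := hd_ex i
    have hPlast : P.getLast hP1 = i := by
      rw [List.getLast?_eq_getLast_of_ne_nil hP1] at hP4
      exact Option.some_injective _ hP4
    by_cases hjP : j ∈ P
    · obtain ⟨s, t, rfl⟩ := List.append_of_mem hjP
      -- prefix
      have hpre : (s ++ [j]) <+: s ++ j :: t := ⟨t, by simp⟩
      have hQ1 : (s ++ [j]) ≠ [] := by simp
      have hQ2 : (s ++ [j]).Chain' R := hP2.prefix hpre
      have hQ3 : (s ++ [j]).Nodup := hP3.sublist hpre.sublist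
      have hQ4 : (s ++ [j]).getLast? = some j := by
        rw [List.getLast?_eq_getLast_of_ne_nil hQ1, List.getLast_append_singleton]
      have hdj := hd_le j _ hQ1 hQ2 hQ3 hQ4
      -- the cycle j :: t
      have htne : t ≠ [] := by
        rintro rfl
        have : (s ++ [j]).getLast (by simp) = i := by
          rw [← hPlast]
        rw [List.getLast_append_singleton] at this
        exact hRij.1.ne' (by rw [this])
      have hsuf : (j :: t) <:+ s ++ j :: t := ⟨s, rfl⟩
      have hctch : (j :: t).Chain' R := hP2.suffix hsuf
      have hctnd : (j :: t).Nodup := hP3.sublist hsuf.sublist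
      have hctlast : (j :: t).getLast (List.cons_ne_nil _ _) = i := by
        rw [← hPlast]
        exact (List.getLast_append_of_ne_nil _ (List.cons_ne_nil _ _)).symm
      have hcyc0 := cycle_nonneg G a O ε hcyc j t htne hctch hctnd
        (by rw [hctlast]; exact hRij.1) (by rw [hctlast]; exact hRij.2)
      rw [hctlast] at hcyc0
      have hsplit : pw w (s ++ j :: t) = pw w (s ++ [j]) + pw w (j :: t) := pw_split w j t s
      have : pw w (s ++ [j]) = d i - pw w (j :: t) := by
        rw [hPval, hsplit]; ring
      rw [this] at hdj
      have hwij : w i j = stepScore a O (i, j) - ε := rfl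
      have : 0 ≤ pw w (j :: t) + w i j := by
        rw [hwij]
        exact hcyc0
      linarith
    · have hQ1 : (P ++ [j]) ≠ [] := by simp
      have hQ2 : (P ++ [j]).Chain' R := by
        show List.IsChain R (P ++ [j])
        rw [List.isChain_append]
        refine ⟨hP2, List.isChain_singleton _, ?_⟩
        intro x hx y hy
        rw [hP4, Option.mem_def, Option.some.injEq] at hx
        rw [List.head?_cons, Option.mem_def, Option.some.injEq] at hy
        subst hx; subst hy
        exact hRij
      have hQ3 : (P ++ [j]).Nodup := by
        rw [List.nodup_append]
        exact ⟨hP3, List.nodup_singleton _, by intro a ha b hb; simp at hb; rintro rfl; exact hjP (hb ▸ ha)⟩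
      have hQ4 : (P ++ [j]).getLast? = some j := by
        rw [List.getLast?_eq_getLast_of_ne_nil hQ1, List.getLast_append_singleton]
      have hdj := hd_le j _ hQ1 hQ2 hQ3 hQ4
      rw [pw_concat w j P hP1, hPlast, ← hPval] at hdj
      exact hdj
  refine ⟨fun v => -(d v), ?_⟩
  intro i j hadj hji
  have h := htri i j ⟨hadj, hji⟩
  have hwij : w i j = stepScore a O (i, j) - ε := rfl
  rw [hwij] at h
  show -(d i) - -(d j) < _
  linarith

/-- Topological lemma: if `O` is `a`-admissible, no step of `O` leaves `W`, and some blank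
edge joins `Wᶜ` to `W`, then some blank edge from `Wᶜ` to `W` can be oriented into `W`
preserving admissibility. -/
theorem extend_admissible_into (G : SimpleGraph V) (a : V → V → ℝ) (O : Finset (V × V))
    (hA : HasCentral G a) (hPO : IsPO G O) (hadm : IsAdmissible G a O) (W : Finset V)
    (h1 : ∀ p ∈ O, p.1 ∈ W → p.2 ∈ W)
    (h2 : ∃ u w : V, u ∉ W ∧ w ∈ W ∧ G.Adj u w ∧ (u, w) ∉ O ∧ (w, u) ∉ O) :
    ∃ u w : V, u ∉ W ∧ w ∈ W ∧ G.Adj u w ∧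
      IsPO G (insert (u, w) O) ∧ IsAdmissible G a (insert (u, w) O) := by
  classical
  obtain ⟨y, hy⟩ := exists_potential G a O hadm
  obtain ⟨u₀, w₀, hu₀, hw₀, hadj₀, hb₁, hb₂⟩ := h2
  set Bl : Finset (V × V) := Finset.univ.filter
    (fun p => p.1 ∈ W ∧ p.2 ∉ W ∧ G.Adj p.1 p.2 ∧ (p.1, p.2) ∉ O ∧ (p.2, p.1) ∉ O) with hBl
  have hne : Bl.Nonempty := ⟨(w₀, u₀), by simp [hBl, hw₀, hu₀, hadj₀.symm, hb₁, hb₂]⟩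
  obtain ⟨p₀, hp₀, hpmin⟩ := Bl.exists_min_image (fun p => a p.1 p.2 - (y p.1 - y p.2)) hne
  obtain ⟨w, u⟩ := p₀
  rw [hBl, Finset.mem_filter] at hp₀
  obtain ⟨-, hwW, huW, hadj, hwuO, huwO⟩ := hp₀
  set s : ℝ := a w u - (y w - y u) with hs
  have hspos : 0 < s := by
    have h := hy w u hadj huwO
    rw [stepScore, if_neg hwuO] at h
    simp only [hs]
    linarith [h]
  set O' : Finset (V × V) := insert (u, w) O with hO'
  set y' : V → ℝ := fun v => if v ∈ W then y v + s else y v with hy'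
  have huwne : u ≠ w := hadj.ne'
  refine ⟨u, w, huW, hwW, hadj.symm, ?_, ?_⟩
  · -- IsPO
    intro p hp
    rcases Finset.mem_insert.mp hp with rfl | hp
    · refine ⟨hadj.symm, ?_⟩
      simp only [Finset.mem_insert]
      push_neg
      constructor
      · intro h
        exact huwne (congrArg Prod.snd h)
      · exact hwuO
    · obtain ⟨hp1, hp2⟩ := hPO p hp
      refine ⟨hp1, ?_⟩
      simp only [Finset.mem_insert]
      push_neg
      refine ⟨?_, hp2⟩
      intro h
      have : p = (w, u) := by
        have h1 : p.2 = u := congrArg Prod.fst h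
        have h2 : p.1 = w := congrArg Prod.snd h
        exact Prod.ext h2 h1
      rw [this] at hp
      exact hwuO hp
  · -- Admissibility
    have hstep : ∀ i j, G.Adj i j → (j, i) ∉ O' →
        y' i - y' j ≤ stepScore a O' (i, j) ∧
        (¬(i ∈ W ∧ j ∉ W) → (i, j) ≠ (u, w) → y' i - y' j < stepScore a O' (i, j)) := by
      intro i j hij hji'
      have hjiO : (j, i) ∉ O := fun h => hji' (Finset.mem_insert_of_mem h)
      have hbase := hy i j hij hjiO
      by_cases huw : (i, j) = (u, w)
      · have hi : i = u := congrArg Prod.fst huw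
        have hj : j = w := congrArg Prod.snd huw
        subst hi; subst hj
        have hsS : stepScore a O' (i, j) = -(a j i) := by
          rw [stepScore, if_pos]
          exact Finset.mem_insert_self _ _
        have hdiff : y' i - y' j = y i - y j - s := by
          simp only [hy']
          rw [if_neg huW, if_pos hwW]
          ring
        constructor
        · rw [hsS, hdiff, hs]; ring_nf; rfl
        · intro _ hcon; exact absurd rfl hcon
      · have hsS : stepScore a O' (i, j) = stepScore a O (i, j) := by
          simp only [stepScore, hO', Finset.mem_insert, huw, false_or]
        rw [hsS]
        by_cases hiW : i ∈ W <;> by_cases hjW : j ∈ W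
        · have hdiff : y' i - y' j = y i - y j := by
            simp only [hy']; rw [if_pos hiW, if_pos hjW]; ring
          rw [hdiff]
          exact ⟨le_of_lt hbase, fun _ _ => hbase⟩
        · -- out-crossing
          have hdiff : y' i - y' j = y i - y j + s := by
            simp only [hy']; rw [if_pos hiW, if_neg hjW]; ring
          have hijO : (i, j) ∉ O := fun h => hjW (h1 _ h hiW)
          have hsS2 : stepScore a O (i, j) = a i j := by
            rw [stepScore, if_neg hijO]
          have hmemBl : (i, j) ∈ Bl := by
            rw [hBl, Finset.mem_filter]
            exact ⟨Finset.mem_univ _, hiW, hjW, hij, hijO, hjiO⟩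
          have hmin := hpmin _ hmemBl
          constructor
          · rw [hdiff, hsS2]
            simp only at hmin
            linarith
          · intro hcon _
            exact absurd ⟨hiW, hjW⟩ hcon
        · -- in-crossing, not (u,w)
          have hdiff : y' i - y' j = y i - y j - s := by
            simp only [hy']; rw [if_neg hiW, if_pos hjW]; ring
          rw [hdiff]
          constructor
          · linarith
          · intro _ _; linarith
        · have hdiff : y' i - y' j = y i - y j := by
            simp only [hy']; rw [if_neg hiW, if_neg hjW]
          rw [hdiff]
          exact ⟨le_of_lt hbase, fun _ _ => hbase⟩
    intro k c hpc
    obtain ⟨hk, hinj, hsteps⟩ := hpc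
    have hle : ∀ i : Fin (k + 1), y' (c i) - y' (c (i + 1)) ≤ stepScore a O' (c i, c (i + 1)) :=
      fun i => (hstep _ _ (hsteps i).1 (hsteps i).2).1
    have hsum0 : ∑ i : Fin (k + 1), (y' (c i) - y' (c (i + 1))) = 0 := by
      rw [Finset.sum_sub_distrib, sub_eq_zero]
      exact (Fintype.sum_equiv (Equiv.addRight (1 : Fin (k + 1)))
        (fun i => y' (c (i + 1))) (fun i => y' (c i)) (fun i => rfl)).symm
    have hstrict : ∃ i : Fin (k + 1),
        y' (c i) - y' (c (i + 1)) < stepScore a O' (c i, c (i + 1)) := by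
      by_contra hcon
      push_neg at hcon
      have htag : ∀ i : Fin (k + 1), (c i ∈ W ∧ c (i + 1) ∉ W) ∨ (c i, c (i + 1)) = (u, w) := by
        intro i
        by_contra htag'
        push_neg at htag'
        exact absurd ((hstep _ _ (hsteps i).1 (hsteps i).2).2
          (fun hc => hc.2 (htag'.1 hc.1)) htag'.2) (not_lt.mpr (hcon i))
      have hexists : ∃ i : Fin (k + 1), (c i, c (i + 1)) = (u, w) := by
        rcases htag 0 with ⟨h01, h02⟩ | h0
        · rcases htag (0 + 1) with ⟨h11, _⟩ | hgood
          · exact absurd h11 h02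
          · exact ⟨0 + 1, hgood⟩
        · exact ⟨0, h0⟩
      obtain ⟨i, hi⟩ := hexists
      have hci : c i = u := congrArg Prod.fst hi
      have hci1 : c (i + 1) = w := congrArg Prod.snd hi
      rcases htag (i + 1) with ⟨-, h2⟩ | heq
      · rcases htag (i + 1 + 1) with ⟨h3, -⟩ | heq2
        · exact absurd h3 h2
        · have hc2 : c (i + 1 + 1) = u := congrArg Prod.fst heq2
          have hcomp := (hsteps (i + 1)).2
          rw [hc2, hci1] at hcomp
          exact hcomp (Finset.mem_insert_self _ _)
      · have hwu : c (i + 1) = u := congrArg Prod.fst heq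
        rw [hci1] at hwu
        rw [← hwu] at huW
        exact huW hwW
    obtain ⟨i₀, hi₀⟩ := hstrict
    have := Finset.sum_lt_sum (fun i (_ : i ∈ Finset.univ) => hle i)
      ⟨i₀, Finset.mem_univ _, hi₀⟩
    rw [hsum0] at this
    exact this
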